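/- arXiv:2601.15993 — 3 statements merged into one kernel-verified Lean document; each statement's English description precedes it below -/
import Mathlib

section
/- Let R > 0, δ > 0, K > 0 and let β ∈ ℝ² be nonzero with 2K ≤ R·‖β‖. Let S be a finite set of vectors u ∈ ℝ² such that: (i) R ≤ ‖u‖ ≤ 2R for all u ∈ S; (ii) the inner product u⋅β ≥ 0 for all u ∈ S; (iii) |u × β| ≤ K for all u ∈ S; and (iv) |u × v| ≥ δ for all distinct u, v ∈ S. Then the cardinality of S is at most 8πKR/(δ‖β‖) + 1. -/
noncomputable def cross (u v : ℝ × ℝ) : ℝ := u.1 * v.2 - u.2 * v.1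

noncomputable def enorm2 (u : ℝ × ℝ) : ℝ := Real.sqrt (u.1 ^ 2 + u.2 ^ 2)

lemma sep_count (T : Finset ℝ) (ε L : ℝ) (hε : 0 < ε) (hL : 0 ≤ L)
    (hsep : ∀ x ∈ T, ∀ y ∈ T, x ≠ y → ε ≤ |x - y|)
    (hspan : ∀ x ∈ T, ∀ y ∈ T, x - y ≤ L) :
    (T.card : ℝ) ≤ L / ε + 1 := by
  rcases T.eq_empty_or_nonempty with rfl | hne
  · simp; positivity
  set m := T.min' hne with hm
  have hmT : m ∈ T := T.min'_mem hne
  set f : ℝ → ℤ := fun x => ⌊(x - m) / ε⌋ with hf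
  have key : ∀ x ∈ T, ∀ y ∈ T, x < y → f x < f y := by
    intro x hx y hy hxy
    have h1 : ε ≤ |x - y| := hsep x hx y hy hxy.ne
    have h2 : x + ε ≤ y := by
      rw [abs_sub_comm, abs_of_nonneg (by linarith)] at h1
      linarith
    have h3 : (x - m) / ε + 1 ≤ (y - m) / ε := by
      rw [div_add' _ _ _ hε.ne', div_le_div_iff_of_pos_right hε]
      linarith
    have := Int.floor_le_floor h3
    rw [Int.floor_add_one] at this
    simpa [hf] using by omega
  have hinj : Set.InjOn f T := by
    intro x hx y hy hxy
    by_contra hne'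
    rcases lt_or_gt_of_ne hne' with h | h
    · exact absurd hxy (key x hx y hy h).ne
    · exact absurd hxy.symm (key y hy x hx h).ne
  have hsub : T.image f ⊆ Finset.Icc 0 ⌊L / ε⌋ := by
    intro z hz
    obtain ⟨x, hx, rfl⟩ := Finset.mem_image.mp hz
    refine Finset.mem_Icc.mpr ⟨Int.floor_nonneg.mpr ?_, Int.floor_le_floor ?_⟩
    · exact div_nonneg (by linarith [T.min'_le x hx]) hε.le
    · exact div_le_div_of_nonneg_right (hspan x hx m hmT) hε.le
  have hfl : (0 : ℤ) ≤ ⌊L / ε⌋ := Int.floor_nonneg.mpr (div_nonneg hL hε.le)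
  have hcard : T.card ≤ (Finset.Icc (0:ℤ) ⌊L / ε⌋).card := by
    rw [← Finset.card_image_of_injOn hinj]
    exact Finset.card_le_card hsub
  rw [Int.card_Icc] at hcard
  have : (T.card : ℝ) ≤ ((⌊L / ε⌋ + 1 : ℤ) : ℝ) := by
    have h4 : ((⌊L / ε⌋ + 1 - 0).toNat : ℤ) = ⌊L / ε⌋ + 1 := by omega
    calc (T.card : ℝ) ≤ ((⌊L / ε⌋ + 1 - 0).toNat : ℝ) := by exact_mod_cast hcard
      _ = ((⌊L / ε⌋ + 1 : ℤ) : ℝ) := by exact_mod_cast h4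
  refine this.trans ?_
  push_cast
  linarith [Int.floor_le (L / ε)]

noncomputable def Yb (β u : ℝ × ℝ) : ℝ := u.1 * β.1 + u.2 * β.2

noncomputable def tb (β u : ℝ × ℝ) : ℝ := cross u β / Yb β u

theorem isolated_sector_count (R δ K : ℝ) (hR : 0 < R) (hδ : 0 < δ) (hK : 0 < K)
    (β : ℝ × ℝ) (hβ : β ≠ 0) (hKR : 2 * K ≤ R * enorm2 β)
    (S : Finset (ℝ × ℝ))
    (hnorm : ∀ u ∈ S, R ≤ enorm2 u ∧ enorm2 u ≤ 2 * R)
    (hinner : ∀ u ∈ S, 0 ≤ u.1 * β.1 + u.2 * β.2)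
    (hcrossβ : ∀ u ∈ S, |cross u β| ≤ K)
    (hsep : ∀ u ∈ S, ∀ v ∈ S, u ≠ v → δ ≤ |cross u v|) :
    (S.card : ℝ) ≤ 8 * Real.pi * K * R / (δ * enorm2 β) + 1 := by
  have hβsq : 0 < β.1 ^ 2 + β.2 ^ 2 := by
    have h : β.1 ≠ 0 ∨ β.2 ≠ 0 := by
      by_contra h
      push_neg at h
      exact hβ (Prod.ext h.1 h.2)
    rcases h with h | h <;> positivity
  have hnβsq : enorm2 β ^ 2 = β.1 ^ 2 + β.2 ^ 2 := Real.sq_sqrt hβsq.le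
  have hnβ : 0 < enorm2 β := Real.sqrt_pos.mpr hβsq
  have husq : ∀ u ∈ S, (enorm2 u) ^ 2 = u.1 ^ 2 + u.2 ^ 2 := by
    intro u hu; exact Real.sq_sqrt (by positivity)
  have hident : ∀ u : ℝ × ℝ, (cross u β) ^ 2 + (Yb β u) ^ 2
      = (u.1 ^ 2 + u.2 ^ 2) * (β.1 ^ 2 + β.2 ^ 2) := by
    intro u; simp only [cross, Yb]; ring
  have hKle : K ≤ R * enorm2 β / 2 := by linarith
  have hYlow : ∀ u ∈ S, R * enorm2 β / 2 ≤ Yb β u := by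
    intro u hu
    have h1 := hnorm u hu
    have h2 : 0 ≤ Yb β u := hinner u hu
    have h3 := hcrossβ u hu
    have h5 := husq u hu
    have hx2 : (cross u β) ^ 2 ≤ K ^ 2 := by
      rw [← sq_abs]; exact pow_le_pow_left₀ (abs_nonneg _) h3 2
    have hnu2 : R ^ 2 ≤ (enorm2 u) ^ 2 := pow_le_pow_left₀ hR.le h1.1 2
    have h4' : cross u β ^ 2 + Yb β u ^ 2 = enorm2 u ^ 2 * enorm2 β ^ 2 := by
      rw [h5, hnβsq]; exact hident u
    have hKsq : K ^ 2 ≤ (R * enorm2 β / 2) ^ 2 := by nlinarith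
    have hprod : R ^ 2 * enorm2 β ^ 2 ≤ enorm2 u ^ 2 * enorm2 β ^ 2 :=
      mul_le_mul_of_nonneg_right hnu2 (sq_nonneg _)
    have hY2 : (R * enorm2 β / 2) ^ 2 ≤ (Yb β u) ^ 2 := by
      nlinarith [sq_nonneg (R * enorm2 β)]
    exact (pow_le_pow_iff_left₀ (by positivity) h2 two_ne_zero).mp hY2
  have hYhigh : ∀ u ∈ S, Yb β u ≤ 2 * R * enorm2 β := by
    intro u hu
    have h1 := hnorm u hu
    have h2 : 0 ≤ Yb β u := hinner u hu
    have h5 := husq u hu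
    have hun : 0 ≤ enorm2 u := Real.sqrt_nonneg _
    have hnu2 : (enorm2 u) ^ 2 ≤ (2 * R) ^ 2 := pow_le_pow_left₀ hun h1.2 2
    have h4' : cross u β ^ 2 + Yb β u ^ 2 = enorm2 u ^ 2 * enorm2 β ^ 2 := by
      rw [h5, hnβsq]; exact hident u
    have hprod : enorm2 u ^ 2 * enorm2 β ^ 2 ≤ (2 * R) ^ 2 * enorm2 β ^ 2 :=
      mul_le_mul_of_nonneg_right hnu2 (sq_nonneg _)
    have hY2 : (Yb β u) ^ 2 ≤ (2 * R * enorm2 β) ^ 2 := by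
      nlinarith [sq_nonneg (cross u β)]
    exact (pow_le_pow_iff_left₀ h2 (by positivity) two_ne_zero).mp hY2
  have hYpos : ∀ u ∈ S, 0 < Yb β u := fun u hu =>
    lt_of_lt_of_le (by positivity) (hYlow u hu)
  have htbound : ∀ u ∈ S, |tb β u| ≤ 2 * K / (R * enorm2 β) := by
    intro u hu
    have hyp := hYpos u hu
    rw [tb, abs_div, abs_of_pos hyp]
    rw [div_le_div_iff₀ hyp (by positivity)]
    have h1 := hcrossβ u hu
    have h2 := hYlow u hu
    nlinarith [abs_nonneg (cross u β),
      mul_le_mul_of_nonneg_right h1 (by positivity : (0:ℝ) ≤ R * enorm2 β),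
      mul_le_mul_of_nonneg_left h2 hK.le]
  have hcrossid : ∀ u v : ℝ × ℝ,
      cross u β * Yb β v - cross v β * Yb β u = cross u v * (β.1 ^ 2 + β.2 ^ 2) := by
    intro u v; simp only [cross, Yb]; ring
  have htsep : ∀ u ∈ S, ∀ v ∈ S, u ≠ v →
      δ / (4 * R ^ 2) ≤ |tb β u - tb β v| := by
    intro u hu v hv huv
    have hyu := hYpos u hu
    have hyv := hYpos v hv
    have hd : tb β u - tb β v
        = (cross u v * (β.1 ^ 2 + β.2 ^ 2)) / (Yb β u * Yb β v) := by
      have hnum : cross u β * Yb β v - Yb β u * cross v β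
          = cross u v * (β.1 ^ 2 + β.2 ^ 2) := by rw [← hcrossid u v]; ring
      rw [tb, tb, div_sub_div _ _ hyu.ne' hyv.ne', hnum]
    rw [hd, abs_div, abs_of_pos (mul_pos hyu hyv), abs_mul, abs_of_pos hβsq]
    rw [div_le_div_iff₀ (by positivity) (mul_pos hyu hyv)]
    have h1 := hsep u hu v hv huv
    have h2 := hYhigh u hu
    have h3 := hYhigh v hv
    have hyup : Yb β u * Yb β v ≤ (2 * R * enorm2 β) * (2 * R * enorm2 β) :=
      mul_le_mul h2 h3 hyv.le (by positivity)
    calc δ * (Yb β u * Yb β v)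
        ≤ δ * (4 * R ^ 2 * enorm2 β ^ 2) := by nlinarith
      _ ≤ |cross u v| * (β.1 ^ 2 + β.2 ^ 2) * (4 * R ^ 2) := by
        rw [← hnβsq]; nlinarith
  have hεpos : 0 < δ / (4 * R ^ 2) := by positivity
  have hinjt : Set.InjOn (tb β) S := by
    intro u hu v hv hteq
    by_contra hne'
    have h := htsep u hu v hv hne'
    rw [hteq, sub_self, abs_zero] at h
    linarith
  have hcardeq : (S.image (tb β)).card = S.card := Finset.card_image_of_injOn hinjt
  have hcount := sep_count (S.image (tb β)) (δ / (4 * R ^ 2)) (4 * K / (R * enorm2 β))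
    hεpos (by positivity)
    (by
      intro x hx y hy hxy
      obtain ⟨u, hu, rfl⟩ := Finset.mem_image.mp hx
      obtain ⟨v, hv, rfl⟩ := Finset.mem_image.mp hy
      exact htsep u hu v hv (fun h => hxy (by rw [h])))
    (by
      intro x hx y hy
      obtain ⟨u, hu, rfl⟩ := Finset.mem_image.mp hx
      obtain ⟨v, hv, rfl⟩ := Finset.mem_image.mp hy
      have h1 := htbound u hu
      have h2 := htbound v hv
      have h3 : tb β u - tb β v ≤ |tb β u| + |tb β v| := by
        calc tb β u - tb β v ≤ |tb β u - tb β v| := le_abs_self _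
          _ ≤ |tb β u| + |tb β v| := abs_sub _ _
      have h4 : 2 * K / (R * enorm2 β) + 2 * K / (R * enorm2 β)
          = 4 * K / (R * enorm2 β) := by ring
      linarith)
  rw [hcardeq] at hcount
  refine hcount.trans ?_
  have hLE : 4 * K / (R * enorm2 β) / (δ / (4 * R ^ 2))
      = 16 * K * R / (δ * enorm2 β) := by
    field_simp
    ring
  rw [hLE]
  have hπ : (3 : ℝ) < Real.pi := Real.pi_gt_three
  have hmono : 16 * K * R ≤ 8 * Real.pi * K * R := by
    nlinarith [mul_pos hK hR, mul_le_mul_of_nonneg_right hπ.le (mul_pos hK hR).le]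
  have := div_le_div_of_nonneg_right hmono (by positivity : (0:ℝ) ≤ δ * enorm2 β)
  linarith
end

section
/- There exists a constant c > 0 such that for all integers j, ℓ and every β ∈ ℝ² with 2^ℓ ≤ ‖β‖ ≤ 2^(ℓ+1), the number of primitive vectors v ∈ ℤ² with nonnegative first coordinate, 2^j ≤ ‖v‖ ≤ 2^(j+1), and |v × β| ≤ 2 is at most c·max(2^(j−ℓ), 1). -/
private lemma pvt_sq_le_of_sqrt_le {x c : ℝ} (hx : 0 ≤ x) (h : Real.sqrt x ≤ c) :
    x ≤ c ^ 2 := by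
  nlinarith [Real.sq_sqrt hx, Real.sqrt_nonneg x]

private lemma pvt_le_of_le_sqrt {x c : ℝ} (hx : 0 ≤ x) (hc : 0 ≤ c) (h : c ≤ Real.sqrt x) :
    c ^ 2 ≤ x := by
  nlinarith [Real.sq_sqrt hx, Real.sqrt_nonneg x]

private lemma pvt_abs_le_of_sq_le {x c : ℝ} (hc : 0 ≤ c) (h : x ^ 2 ≤ c ^ 2) : |x| ≤ c := by
  nlinarith [sq_abs x, abs_nonneg x]

set_option maxHeartbeats 1000000 in
theorem primitive_vector_triangle_count :
    ∃ c : ℝ, 0 < c ∧ ∀ (j ℓ : ℤ) (β : ℝ × ℝ),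
      (2 : ℝ) ^ ℓ ≤ enorm2 β → enorm2 β ≤ (2 : ℝ) ^ (ℓ + 1) →
      (({v : ℤ × ℤ | IsCoprime v.1 v.2 ∧ 0 ≤ v.1 ∧
          (2 : ℝ) ^ j ≤ enorm2 ((v.1 : ℝ), (v.2 : ℝ)) ∧
          enorm2 ((v.1 : ℝ), (v.2 : ℝ)) ≤ (2 : ℝ) ^ (j + 1) ∧
          |cross ((v.1 : ℝ), (v.2 : ℝ)) β| ≤ 2}).ncard : ℝ)
        ≤ c * max ((2 : ℝ) ^ (j - ℓ)) 1 := by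
  classical
  refine ⟨153, by norm_num, ?_⟩
  intro j ℓ β hβl hβu
  set S : Set (ℤ × ℤ) := {v : ℤ × ℤ | IsCoprime v.1 v.2 ∧ 0 ≤ v.1 ∧
          (2 : ℝ) ^ j ≤ enorm2 ((v.1 : ℝ), (v.2 : ℝ)) ∧
          enorm2 ((v.1 : ℝ), (v.2 : ℝ)) ≤ (2 : ℝ) ^ (j + 1) ∧
          |cross ((v.1 : ℝ), (v.2 : ℝ)) β| ≤ 2} with hSdef
  have hmax1 : (1:ℝ) ≤ max ((2:ℝ)^(j-ℓ)) 1 := le_max_right _ _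
  have hmaxpos : (0:ℝ) < max ((2:ℝ)^(j-ℓ)) 1 := lt_of_lt_of_le one_pos hmax1
  rcases S.eq_empty_or_nonempty with hSe | hne
  · rw [hSe]
    simp only [Set.ncard_empty, Nat.cast_zero]
    nlinarith [hmaxpos]
  obtain ⟨u, huS⟩ := hne
  -- basic real facts about members of S
  have hvlb : ∀ v ∈ S, ((2:ℝ)^j)^2 ≤ (v.1:ℝ)^2 + (v.2:ℝ)^2 := by
    intro v hv
    have h1 := hv.2.2.1
    simp only [enorm2] at h1
    exact pvt_le_of_le_sqrt (by positivity) (by positivity) h1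
  have hvub : ∀ v ∈ S, (v.1:ℝ)^2 + (v.2:ℝ)^2 ≤ ((2:ℝ)^(j+1))^2 := by
    intro v hv
    have h2 := hv.2.2.2.1
    simp only [enorm2] at h2
    exact pvt_sq_le_of_sqrt_le (by positivity) h2
  have hvcr : ∀ v ∈ S, |(v.1:ℝ) * β.2 - (v.2:ℝ) * β.1| ≤ 2 := by
    intro v hv
    have h3 := hv.2.2.2.2
    simpa [cross] using h3
  -- norm of β
  set s : ℝ := enorm2 β with hs
  have hspos : (0:ℝ) < s := lt_of_lt_of_le (by positivity) hβl
  have hB : s ^ 2 = β.1 ^ 2 + β.2 ^ 2 := by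
    rw [hs]; simp only [enorm2]; exact Real.sq_sqrt (by positivity)
  -- coprimality witnesses for u
  obtain ⟨x, y, hxy⟩ := huS.1
  set n : ℕ := (j - ℓ).toNat with hn
  set N : ℤ := 8 * 2 ^ n with hN
  have hNnn : (0:ℤ) ≤ N := by positivity
  -- cross product bound
  have hczbound : ∀ v ∈ S, |u.1 * v.2 - u.2 * v.1| ≤ N := by
    intro v hv
    have hcru := hvcr u huS
    have hcrv := hvcr v hv
    have hdotv : |β.1 * (v.1:ℝ) + β.2 * (v.2:ℝ)| ≤ s * 2 ^ (j+1) := by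
      apply pvt_abs_le_of_sq_le (by positivity)
      have hcs : (β.1 * (v.1:ℝ) + β.2 * (v.2:ℝ))^2 ≤
          (β.1^2 + β.2^2) * ((v.1:ℝ)^2 + (v.2:ℝ)^2) := by
        nlinarith [sq_nonneg (β.1 * (v.2:ℝ) - β.2 * (v.1:ℝ))]
      have hub := hvub v hv
      nlinarith [sq_nonneg s, hB]
    have hdotu : |β.1 * (u.1:ℝ) + β.2 * (u.2:ℝ)| ≤ s * 2 ^ (j+1) := by
      apply pvt_abs_le_of_sq_le (by positivity)
      have hcs : (β.1 * (u.1:ℝ) + β.2 * (u.2:ℝ))^2 ≤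
          (β.1^2 + β.2^2) * ((u.1:ℝ)^2 + (u.2:ℝ)^2) := by
        nlinarith [sq_nonneg (β.1 * (u.2:ℝ) - β.2 * (u.1:ℝ))]
      have hub := hvub u huS
      nlinarith [sq_nonneg s, hB]
    set c : ℝ := (u.1:ℝ) * (v.2:ℝ) - (u.2:ℝ) * (v.1:ℝ) with hc
    have hid : c * s^2 = ((u.1:ℝ) * β.2 - (u.2:ℝ) * β.1) * (β.1 * (v.1:ℝ) + β.2 * (v.2:ℝ))
        - ((v.1:ℝ) * β.2 - (v.2:ℝ) * β.1) * (β.1 * (u.1:ℝ) + β.2 * (u.2:ℝ)) := by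
      rw [hB]; ring
    have h1 : |c| * s^2 ≤ s * 2 ^ (j+3) := by
      have e1 : |c| * s^2 = |c * s^2| := by
        rw [abs_mul, abs_of_nonneg (sq_nonneg s)]
      rw [e1, hid]
      have h2 : |((u.1:ℝ) * β.2 - (u.2:ℝ) * β.1) * (β.1 * (v.1:ℝ) + β.2 * (v.2:ℝ))
          - ((v.1:ℝ) * β.2 - (v.2:ℝ) * β.1) * (β.1 * (u.1:ℝ) + β.2 * (u.2:ℝ))|
          ≤ |(u.1:ℝ) * β.2 - (u.2:ℝ) * β.1| * |β.1 * (v.1:ℝ) + β.2 * (v.2:ℝ)|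
          + |(v.1:ℝ) * β.2 - (v.2:ℝ) * β.1| * |β.1 * (u.1:ℝ) + β.2 * (u.2:ℝ)| := by
        calc |((u.1:ℝ) * β.2 - (u.2:ℝ) * β.1) * (β.1 * (v.1:ℝ) + β.2 * (v.2:ℝ))
            - ((v.1:ℝ) * β.2 - (v.2:ℝ) * β.1) * (β.1 * (u.1:ℝ) + β.2 * (u.2:ℝ))|
            ≤ |((u.1:ℝ) * β.2 - (u.2:ℝ) * β.1) * (β.1 * (v.1:ℝ) + β.2 * (v.2:ℝ))|
              + |((v.1:ℝ) * β.2 - (v.2:ℝ) * β.1) * (β.1 * (u.1:ℝ) + β.2 * (u.2:ℝ))| :=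
                abs_sub _ _
          _ = _ := by rw [abs_mul, abs_mul]
      have h3 : |(u.1:ℝ) * β.2 - (u.2:ℝ) * β.1| * |β.1 * (v.1:ℝ) + β.2 * (v.2:ℝ)|
          ≤ 2 * (s * 2 ^ (j+1)) :=
        mul_le_mul hcru hdotv (abs_nonneg _) (by norm_num)
      have h4 : |(v.1:ℝ) * β.2 - (v.2:ℝ) * β.1| * |β.1 * (u.1:ℝ) + β.2 * (u.2:ℝ)|
          ≤ 2 * (s * 2 ^ (j+1)) :=
        mul_le_mul hcrv hdotu (abs_nonneg _) (by norm_num)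
      have h5 : (2:ℝ) ^ (j+3) = 4 * 2 ^ (j+1) := by
        rw [show j + 3 = (j+1) + 2 by ring, zpow_add₀ (by norm_num : (2:ℝ) ≠ 0)]
        norm_num
        ring
      calc _ ≤ _ := h2
        _ ≤ 2 * (s * 2 ^ (j+1)) + 2 * (s * 2 ^ (j+1)) := add_le_add h3 h4
        _ = s * 2 ^ (j+3) := by rw [h5]; ring
    have h6 : |c| * s ≤ 2 ^ (j+3) := by
      have h7 : |c| * s * s ≤ 2 ^ (j+3) * s := by nlinarith
      exact le_of_mul_le_mul_right h7 hspos
    have h8 : |c| * 2 ^ ℓ ≤ 2 ^ (j+3) :=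
      le_trans (mul_le_mul_of_nonneg_left hβl (abs_nonneg c)) h6
    have h9 : |c| ≤ 2 ^ (j + 3 - ℓ) := by
      rw [zpow_sub₀ (by norm_num : (2:ℝ) ≠ 0), le_div_iff₀ (by positivity)]
      exact h8
    have h10 : (2:ℝ) ^ (j + 3 - ℓ) ≤ (N:ℝ) := by
      have hnle : j - ℓ ≤ (n:ℤ) := Int.self_le_toNat _
      have he : (2:ℝ) ^ (j + 3 - ℓ) = 8 * 2 ^ (j - ℓ) := by
        rw [show j + 3 - ℓ = (j - ℓ) + 3 by ring, zpow_add₀ (by norm_num : (2:ℝ) ≠ 0)]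
        norm_num; ring
      rw [he]
      have h11 : (2:ℝ) ^ (j - ℓ) ≤ 2 ^ ((n:ℤ)) :=
        zpow_le_zpow_right₀ (by norm_num) hnle
      have h12 : ((N:ℤ):ℝ) = 8 * (2:ℝ) ^ ((n:ℤ)) := by
        rw [hN]; push_cast; rw [zpow_natCast]
      rw [h12]; linarith
    have habs : |((u.1 * v.2 - u.2 * v.1 : ℤ) : ℝ)| ≤ ((N:ℤ):ℝ) := by
      have hcast : ((u.1 * v.2 - u.2 * v.1 : ℤ) : ℝ) = c := by rw [hc]; push_cast; ring
      rw [hcast]; exact h9.trans h10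
    exact_mod_cast habs
  -- fiber lemma
  have hfiber : ∀ v ∈ S, ∀ w ∈ S,
      u.1 * v.2 - u.2 * v.1 = u.1 * w.2 - u.2 * w.1 →
      ∃ t : ℤ, v.1 - w.1 = t * u.1 ∧ v.2 - w.2 = t * u.2 ∧ |t| ≤ 4 := by
    intro v hv w hw hk
    refine ⟨x * (v.1 - w.1) + y * (v.2 - w.2), ?_, ?_, ?_⟩
    · linear_combination (-(v.1 - w.1)) * hxy + (-y) * hk
    · linear_combination (-(v.2 - w.2)) * hxy + x * hk
    · set t : ℤ := x * (v.1 - w.1) + y * (v.2 - w.2) with ht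
      have ht1 : v.1 - w.1 = t * u.1 := by
        rw [ht]; linear_combination (-(v.1 - w.1)) * hxy + (-y) * hk
      have ht2 : v.2 - w.2 = t * u.2 := by
        rw [ht]; linear_combination (-(v.2 - w.2)) * hxy + x * hk
      have e1 : ((v.1:ℝ)) - (w.1:ℝ) = (t:ℝ) * (u.1:ℝ) := by exact_mod_cast ht1
      have e2 : ((v.2:ℝ)) - (w.2:ℝ) = (t:ℝ) * (u.2:ℝ) := by exact_mod_cast ht2
      have hA := hvlb u huS
      have hV := hvub v hv
      have hW := hvub w hw
      have hpow : (2:ℝ) ^ (j+1) = 2 * 2 ^ j := by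
        rw [zpow_add_one₀ (by norm_num : (2:ℝ) ≠ 0)]; ring
      have hjpos : (0:ℝ) < 2 ^ j := by positivity
      have hd : (t:ℝ)^2 * ((u.1:ℝ)^2 + (u.2:ℝ)^2)
          = ((v.1:ℝ) - (w.1:ℝ))^2 + ((v.2:ℝ) - (w.2:ℝ))^2 := by
        rw [e1, e2]; ring
      have hdle : ((v.1:ℝ) - (w.1:ℝ))^2 + ((v.2:ℝ) - (w.2:ℝ))^2 ≤ 16 * ((2:ℝ)^j)^2 := by
        have h16 : ((2:ℝ)^(j+1))^2 = 4 * ((2:ℝ)^j)^2 := by rw [hpow]; ring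
        nlinarith [sq_nonneg ((v.1:ℝ) + (w.1:ℝ)), sq_nonneg ((v.2:ℝ) + (w.2:ℝ)), hV, hW]
      have htr : ((t:ℝ))^2 ≤ 16 := by
        nlinarith [hd, hdle, hA, sq_nonneg ((t:ℝ)), mul_pos hjpos hjpos]
      have htz : t^2 ≤ 16 := by exact_mod_cast htr
      rw [abs_le]
      constructor <;> nlinarith [htz]
  -- basepoint of each fiber, via choice
  set czf : ℤ × ℤ → ℤ := fun v => u.1 * v.2 - u.2 * v.1 with hczf
  set bp : ℤ → ℤ × ℤ := fun k => if h : ∃ w, w ∈ S ∧ czf w = k then h.choose else 0 with hbp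
  have hbp_mem : ∀ v ∈ S, bp (czf v) ∈ S ∧ czf (bp (czf v)) = czf v := by
    intro v hv
    have h : ∃ w, w ∈ S ∧ czf w = czf v := ⟨v, hv, rfl⟩
    simp only [hbp, dif_pos h]
    exact h.choose_spec
  set g : ℤ × ℤ → ℤ × ℤ :=
    fun v => (czf v, x * (v.1 - (bp (czf v)).1) + y * (v.2 - (bp (czf v)).2)) with hg
  -- injectivity of g on S
  have hinj : Set.InjOn g S := by
    intro v hv w hw hgv
    have hk : czf v = czf w := congrArg Prod.fst hgv
    have h2 : x * (v.1 - (bp (czf v)).1) + y * (v.2 - (bp (czf v)).2)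
        = x * (w.1 - (bp (czf w)).1) + y * (w.2 - (bp (czf w)).2) := congrArg Prod.snd hgv
    obtain ⟨hbS, hbk⟩ := hbp_mem v hv
    obtain ⟨t1, ht11, ht12, -⟩ := hfiber v hv (bp (czf v)) hbS hbk.symm
    rw [← hk] at h2
    obtain ⟨t2, ht21, ht22, -⟩ := hfiber w hw (bp (czf v)) hbS (by show czf w = czf (bp (czf v)); rw [hbk, hk])
    have e1 : x * (v.1 - (bp (czf v)).1) + y * (v.2 - (bp (czf v)).2) = t1 := by
      rw [ht11, ht12]; linear_combination t1 * hxy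
    have e2 : x * (w.1 - (bp (czf v)).1) + y * (w.2 - (bp (czf v)).2) = t2 := by
      rw [ht21, ht22]; linear_combination t2 * hxy
    have ht12eq : t1 = t2 := by rw [e1, e2] at h2; exact h2
    rw [ht12eq] at ht11 ht12
    exact Prod.ext_iff.2 ⟨by linarith, by linarith⟩
  -- image lands in a finite box
  have himg : g '' S ⊆ ↑(Finset.Icc (-N) N ×ˢ Finset.Icc (-4:ℤ) 4) := by
    rintro _ ⟨v, hv, rfl⟩
    simp only [Finset.coe_product, Set.mem_prod, Finset.mem_coe, Finset.mem_Icc]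
    obtain ⟨hbS, hbk⟩ := hbp_mem v hv
    obtain ⟨t, ht1, ht2, ht4⟩ := hfiber v hv (bp (czf v)) hbS hbk.symm
    have e1 : x * (v.1 - (bp (czf v)).1) + y * (v.2 - (bp (czf v)).2) = t := by
      rw [ht1, ht2]; linear_combination t * hxy
    have hcz := hczbound v hv
    constructor
    · exact abs_le.mp hcz
    · show -4 ≤ x * (v.1 - (bp (czf v)).1) + y * (v.2 - (bp (czf v)).2)
        ∧ x * (v.1 - (bp (czf v)).1) + y * (v.2 - (bp (czf v)).2) ≤ 4
      rw [e1]
      exact abs_le.mp ht4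
  -- conclude by counting
  have hcount : (S.ncard : ℝ) ≤ ((Finset.Icc (-N) N ×ˢ Finset.Icc (-4:ℤ) 4).card : ℝ) := by
    have h1 : S.ncard = (g '' S).ncard := (Set.ncard_image_of_injOn hinj).symm
    have h2 := Set.ncard_le_ncard himg (Finset.finite_toSet _)
    rw [Set.ncard_coe_finset] at h2
    rw [h1]
    exact_mod_cast h2
  have hcard : ((Finset.Icc (-N) N ×ˢ Finset.Icc (-4:ℤ) 4).card : ℝ) = (2*(N:ℝ)+1) * 9 := by
    rw [Finset.card_product, Int.card_Icc, Int.card_Icc]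
    rw [show N + 1 - -N = 2*N+1 by ring, show (4:ℤ) + 1 - -4 = 9 by norm_num]
    have h1 : ((2*N+1).toNat : ℝ) = 2*(N:ℝ)+1 := by
      have : (((2*N+1).toNat : ℤ) : ℝ) = ((2*N+1 : ℤ) : ℝ) := by
        rw [Int.toNat_of_nonneg (by positivity)]
      push_cast at this ⊢
      linarith
    push_cast
    rw [h1]
  have h2n : ((2:ℝ)) ^ n ≤ max ((2:ℝ)^(j-ℓ)) 1 := by
    rcases le_or_gt 0 (j - ℓ) with h | h
    · have he : ((n:ℤ)) = j - ℓ := Int.toNat_of_nonneg h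
      have : (2:ℝ) ^ n = (2:ℝ) ^ (j - ℓ) := by
        rw [← zpow_natCast (2:ℝ) n, he]
      rw [this]
      exact le_max_left _ _
    · have he : n = 0 := Int.toNat_of_nonpos h.le
      rw [he]
      simp only [pow_zero]
      exact hmax1
  have hNr : (N:ℝ) = 8 * 2 ^ n := by rw [hN]; push_cast; ring
  calc (S.ncard : ℝ) ≤ _ := hcount
    _ = (2*(N:ℝ)+1) * 9 := hcard
    _ ≤ 153 * max ((2:ℝ)^(j-ℓ)) 1 := by
        rw [hNr]
        have h2npos : (0:ℝ) < 2 ^ n := by positivity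
        nlinarith [h2n, hmax1, h2npos]
end

section
/- Let D ≥ 3 be a real number, a > 0, and let I ⊂ ℝ be an interval of length M. Let I₁, …, I_n ⊂ ℝ be intervals with |I_k| ≥ a for each k and ∑_{k=1}^n |I_k| ≤ M/(4D). For each k let Ĩ_k be the interval with the same center as I_k and length D·|I_k|, and set I₀ = I \ ⋃_k Ĩ_k. Then: (1) the Lebesgue measure of I₀ is at least (3/4)·M; and (2) for every x ∈ I₀, the closed interval centered at x of length (D−2)·a is disjoint from every I_k. -/
open MeasureTheory

theorem dilation_covering_lemma (D a M x : ℝ) (hD : 3 ≤ D) (ha : 0 < a)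
    (n : ℕ) (c L : Fin n → ℝ)
    (hL : ∀ k, a ≤ L k)
    (hsum : ∑ k, L k ≤ M / (4 * D)) :
    (3 / 4 * M : ℝ) ≤ (volume
        (Set.Icc x (x + M) \ ⋃ k, Set.Icc (c k - D * L k / 2) (c k + D * L k / 2))).toReal ∧
    ∀ y ∈ Set.Icc x (x + M) \ ⋃ k, Set.Icc (c k - D * L k / 2) (c k + D * L k / 2),
      ∀ k, Disjoint (Set.Icc (y - (D - 2) * a / 2) (y + (D - 2) * a / 2))
        (Set.Icc (c k - L k / 2) (c k + L k / 2)) := by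
  have hD0 : (0 : ℝ) < D := by linarith
  have hM0 : (0 : ℝ) ≤ M := by
    have h0 : (0 : ℝ) ≤ ∑ k, L k :=
      Finset.sum_nonneg fun k _ => le_trans ha.le (hL k)
    have h4D : (0:ℝ) < 4 * D := by linarith
    rcases div_nonneg_iff.mp (le_trans h0 hsum) with ⟨h, _⟩ | ⟨_, h2⟩
    · exact h
    · linarith
  constructor
  · -- measure estimate
    set S := Set.Icc x (x + M)
    set T := ⋃ k, Set.Icc (c k - D * L k / 2) (c k + D * L k / 2)
    have hS : volume S = ENNReal.ofReal M := by
      simp [S, Real.volume_Icc]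
    have hT : volume T ≤ ENNReal.ofReal (M / 4) := by
      calc volume T ≤ ∑ k, volume (Set.Icc (c k - D * L k / 2) (c k + D * L k / 2)) :=
            measure_iUnion_fintype_le _ _
        _ = ∑ k, ENNReal.ofReal (D * L k) := by
            congr 1; funext k; rw [Real.volume_Icc]; ring_nf
        _ = ENNReal.ofReal (∑ k, D * L k) := by
            rw [ENNReal.ofReal_sum_of_nonneg]
            intro k _
            have := hL k
            nlinarith
        _ ≤ ENNReal.ofReal (M / 4) := by
            apply ENNReal.ofReal_le_ofReal
            rw [← Finset.mul_sum]
            rw [le_div_iff₀ (by linarith : (0:ℝ) < 4 * D)] at hsum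
            nlinarith
    have hdiff : ENNReal.ofReal (3 / 4 * M) ≤ volume (S \ T) := by
      have key : ENNReal.ofReal M ≤ volume (S \ T) + ENNReal.ofReal (M / 4) := by
        calc ENNReal.ofReal M = volume S := hS.symm
          _ ≤ volume ((S \ T) ∪ T) := measure_mono (Set.subset_diff_union S T)
          _ ≤ volume (S \ T) + volume T := measure_union_le _ _
          _ ≤ volume (S \ T) + ENNReal.ofReal (M / 4) := by gcongr
      calc ENNReal.ofReal (3 / 4 * M)
          = ENNReal.ofReal M - ENNReal.ofReal (M / 4) := by
            rw [← ENNReal.ofReal_sub _ (by linarith)]; congr 1; ring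
        _ ≤ volume (S \ T) := tsub_le_iff_right.mpr key
    have hfin : volume (S \ T) ≠ ⊤ := by
      have : volume (S \ T) ≤ volume S := measure_mono Set.diff_subset
      rw [hS] at this
      exact ne_top_of_le_ne_top ENNReal.ofReal_ne_top this
    have := ENNReal.toReal_mono hfin hdiff
    rwa [ENNReal.toReal_ofReal (by linarith)] at this
  · rintro y ⟨hyS, hyT⟩ k
    have hyk : y ∉ Set.Icc (c k - D * L k / 2) (c k + D * L k / 2) := by
      intro h; exact hyT (Set.mem_iUnion.mpr ⟨k, h⟩)
    rw [Set.mem_Icc, not_and_or, not_le, not_le] at hyk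
    rw [Set.disjoint_left]
    rintro z ⟨hz1, hz2⟩ ⟨hw1, hw2⟩
    have hLk := hL k
    rcases hyk with h | h <;> nlinarith
end
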